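/- For every m×m complex positive semidefinite Hermitian matrix F_v, there exists a real m×2m matrix W such that F_v = W·F_w·Wᵀ, where W is regarded as a complex matrix, Wᵀ is its transpose, and F_w = I_{2m} + i·diag_m(J). -/

import Mathlib

open Matrix
open scoped ComplexOrder

/-- The 2×2 real matrix `J = [[0,1],[-1,0]]`. -/
def Jmat : Matrix (Fin 2) (Fin 2) ℝ := !![0, 1; -1, 0]

/-- `diagJ k` is the `2k × 2k` block-diagonal real matrix with `k` copies of `J`. -/
def diagJ (k : ℕ) : Matrix (Fin (2 * k)) (Fin (2 * k)) ℝ :=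
  Matrix.of fun i j =>
    if i.val / 2 = j.val / 2 then
      Jmat ⟨i.val % 2, Nat.mod_lt _ two_pos⟩ ⟨j.val % 2, Nat.mod_lt _ two_pos⟩
    else 0

/-- The canonical Ito matrix `F_w = I_{2m} + i · diag_m(J)` as a complex `2m × 2m` matrix. -/
noncomputable def Fw (m : ℕ) : Matrix (Fin (2 * m)) (Fin (2 * m)) ℂ :=
  1 + Complex.I • (diagJ m).map (Complex.ofReal)

/- auxiliary -/
def e0 {m : ℕ} (k : Fin m) : Fin (2 * m) := ⟨2 * k.val, by omega⟩
def e1 {m : ℕ} (k : Fin m) : Fin (2 * m) := ⟨2 * k.val + 1, by omega⟩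

lemma sum_range_two_mul {M : Type*} [AddCommMonoid M] (n : ℕ) (g : ℕ → M) :
    ∑ i ∈ Finset.range (2 * n), g i = ∑ k ∈ Finset.range n, (g (2 * k) + g (2 * k + 1)) := by
  induction n with
  | zero => simp
  | succ n ih =>
    have h : 2 * (n + 1) = 2 * n + 1 + 1 := by ring
    rw [h, Finset.sum_range_succ, Finset.sum_range_succ, ih, Finset.sum_range_succ, add_assoc]

lemma sum_pair {M : Type*} [AddCommMonoid M] {m : ℕ} (f : Fin (2 * m) → M) :
    ∑ i, f i = ∑ k : Fin m, (f (e0 k) + f (e1 k)) := by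
  set g : ℕ → M := fun i => if h : i < 2 * m then f ⟨i, h⟩ else 0 with hg
  have h1 : ∑ i, f i = ∑ i ∈ Finset.range (2 * m), g i := by
    rw [Finset.sum_range]
    exact Finset.sum_congr rfl fun i _ => by simp [hg, i.isLt]
  rw [h1, sum_range_two_mul, Finset.sum_range]
  refine Finset.sum_congr rfl fun k _ => ?_
  have h2 : 2 * (k : ℕ) < 2 * m := by omega
  have h3 : 2 * (k : ℕ) + 1 < 2 * m := by omega
  simp [hg, h2, h3, e0, e1]

lemma Jmat00 : Jmat 0 0 = 0 := by simp [Jmat]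
lemma Jmat01 : Jmat 0 1 = 1 := by simp [Jmat]
lemma Jmat10 : Jmat 1 0 = -1 := by simp [Jmat]
lemma Jmat11 : Jmat 1 1 = 0 := by simp [Jmat]

lemma diagJ_e0_e0 {m : ℕ} (k l : Fin m) : diagJ m (e0 k) (e0 l) = 0 := by
  have h0 : (⟨2 * k.val % 2, Nat.mod_lt _ two_pos⟩ : Fin 2) = 0 := Fin.ext (show _ % 2 = 0 by omega)
  have h0' : (⟨2 * l.val % 2, Nat.mod_lt _ two_pos⟩ : Fin 2) = 0 := Fin.ext (show _ % 2 = 0 by omega)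
  simp only [diagJ, e0, Matrix.of_apply, h0, h0', Jmat00, ite_self]

lemma diagJ_e1_e1 {m : ℕ} (k l : Fin m) : diagJ m (e1 k) (e1 l) = 0 := by
  have h0 : (⟨(2 * k.val + 1) % 2, Nat.mod_lt _ two_pos⟩ : Fin 2) = 1 := Fin.ext (show _ % 2 = 1 by omega)
  have h0' : (⟨(2 * l.val + 1) % 2, Nat.mod_lt _ two_pos⟩ : Fin 2) = 1 := Fin.ext (show _ % 2 = 1 by omega)
  simp only [diagJ, e1, Matrix.of_apply, h0, h0', Jmat11, ite_self]

lemma diagJ_e0_e1 {m : ℕ} (k l : Fin m) :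
    diagJ m (e0 k) (e1 l) = if k = l then 1 else 0 := by
  have h0 : (⟨2 * k.val % 2, Nat.mod_lt _ two_pos⟩ : Fin 2) = 0 := Fin.ext (show _ % 2 = 0 by omega)
  have h1 : (⟨(2 * l.val + 1) % 2, Nat.mod_lt _ two_pos⟩ : Fin 2) = 1 := Fin.ext (show _ % 2 = 1 by omega)
  simp only [diagJ, e0, e1, Matrix.of_apply, h0, h1, Jmat01]
  by_cases h : k = l
  · subst h; rw [if_pos (by omega), if_pos rfl]
  · have hv : k.val ≠ l.val := fun hh => h (Fin.ext hh)
    rw [if_neg (by omega), if_neg h]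

lemma diagJ_e1_e0 {m : ℕ} (k l : Fin m) :
    diagJ m (e1 k) (e0 l) = if k = l then -1 else 0 := by
  have h1 : (⟨(2 * k.val + 1) % 2, Nat.mod_lt _ two_pos⟩ : Fin 2) = 1 := Fin.ext (show _ % 2 = 1 by omega)
  have h0 : (⟨2 * l.val % 2, Nat.mod_lt _ two_pos⟩ : Fin 2) = 0 := Fin.ext (show _ % 2 = 0 by omega)
  simp only [diagJ, e0, e1, Matrix.of_apply, h0, h1, Jmat10]
  by_cases h : k = l
  · subst h; rw [if_pos (by omega), if_pos rfl]
  · have hv : k.val ≠ l.val := fun hh => h (Fin.ext hh)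
    rw [if_neg (by omega), if_neg h]

lemma e0_eq_e0 {m : ℕ} (k l : Fin m) : (e0 k = e0 l) ↔ k = l := by
  simp [e0, Fin.ext_iff]
lemma e1_eq_e1 {m : ℕ} (k l : Fin m) : (e1 k = e1 l) ↔ k = l := by
  simp [e1, Fin.ext_iff]
lemma e0_ne_e1 {m : ℕ} (k l : Fin m) : e0 k ≠ e1 l := by
  simp [e0, e1, Fin.ext_iff]; omega
lemma e1_ne_e0 {m : ℕ} (k l : Fin m) : e1 k ≠ e0 l := by
  simp [e0, e1, Fin.ext_iff]; omega

lemma Fw_e0_e0 {m : ℕ} (k l : Fin m) : Fw m (e0 k) (e0 l) = if k = l then 1 else 0 := by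
  simp [Fw, Matrix.one_apply, diagJ_e0_e0, e0_eq_e0]

lemma Fw_e1_e1 {m : ℕ} (k l : Fin m) : Fw m (e1 k) (e1 l) = if k = l then 1 else 0 := by
  simp [Fw, Matrix.one_apply, diagJ_e1_e1, e1_eq_e1]

lemma Fw_e0_e1 {m : ℕ} (k l : Fin m) : Fw m (e0 k) (e1 l) = if k = l then Complex.I else 0 := by
  by_cases h : k = l <;> simp [Fw, Matrix.one_apply, diagJ_e0_e1, e0_ne_e1, h]

lemma Fw_e1_e0 {m : ℕ} (k l : Fin m) : Fw m (e1 k) (e0 l) = if k = l then -Complex.I else 0 := by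
  by_cases h : k = l <;> simp [Fw, Matrix.one_apply, diagJ_e1_e0, e1_ne_e0, h]

noncomputable def Wmat {m : ℕ} (B : Matrix (Fin m) (Fin m) ℂ) :
    Matrix (Fin m) (Fin (2 * m)) ℝ :=
  Matrix.of fun a j =>
    if j.val % 2 = 0 then -(B ⟨j.val / 2, by have := j.isLt; omega⟩ a).im
    else (B ⟨j.val / 2, by have := j.isLt; omega⟩ a).re

lemma Wmat_e0 {m : ℕ} (B : Matrix (Fin m) (Fin m) ℂ) (a : Fin m) (k : Fin m) :
    Wmat B a (e0 k) = -(B k a).im := by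
  have hk : (⟨(2 * k.val) / 2, by omega⟩ : Fin m) = k := Fin.ext (show _ / 2 = k.val by omega)
  simp only [Wmat, Matrix.of_apply, e0]
  rw [if_pos (by omega), hk]

lemma Wmat_e1 {m : ℕ} (B : Matrix (Fin m) (Fin m) ℂ) (a : Fin m) (k : Fin m) :
    Wmat B a (e1 k) = (B k a).re := by
  have hk : (⟨(2 * k.val + 1) / 2, by omega⟩ : Fin m) = k := Fin.ext (show _ / 2 = k.val by omega)
  simp only [Wmat, Matrix.of_apply, e1]
  rw [if_neg (by omega), hk]

theorem psd_factorization_through_Fw (m : ℕ) (Fv : Matrix (Fin m) (Fin m) ℂ)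
    (hFv : Fv.PosSemidef) :
    ∃ W : Matrix (Fin m) (Fin (2 * m)) ℝ,
      Fv = (W.map (Complex.ofReal)) * Fw m * (W.map (Complex.ofReal))ᵀ := by
  obtain ⟨B, hB⟩ : ∃ B : Matrix (Fin m) (Fin m) ℂ, Fv = Bᴴ * B := by
    open scoped MatrixOrder in
    have h0 : (0 : Matrix (Fin m) (Fin m) ℂ) ≤ Fv := Matrix.nonneg_iff_posSemidef.mpr hFv
    refine ⟨CFC.sqrt Fv, ?_⟩
    rw [← Matrix.star_eq_conjTranspose, (CFC.sqrt_nonneg Fv).isSelfAdjoint.star_eq,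
      CFC.sqrt_mul_sqrt_self Fv h0]
  refine ⟨Wmat B, ?_⟩
  ext a b
  rw [hB]
  have lhs : (Bᴴ * B) a b = ∑ p, (starRingEnd ℂ) (B p a) * B p b := by
    simp [Matrix.mul_apply, Matrix.conjTranspose_apply]
  rw [lhs]
  have rhs :
      ((Wmat B).map Complex.ofReal * Fw m * ((Wmat B).map Complex.ofReal)ᵀ) a b
        = ∑ p, ∑ q, ((Wmat B a p : ℝ) : ℂ) * Fw m p q * ((Wmat B b q : ℝ) : ℂ) := by
    simp only [Matrix.mul_apply, Matrix.transpose_apply, Matrix.map_apply, Finset.sum_mul]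
    rw [Finset.sum_comm]
  rw [rhs]
  rw [sum_pair (fun p => ∑ q, ((Wmat B a p : ℝ) : ℂ) * Fw m p q * ((Wmat B b q : ℝ) : ℂ))]
  refine Finset.sum_congr rfl fun k _ => ?_
  rw [sum_pair (fun q => ((Wmat B a (e0 k) : ℝ) : ℂ) * Fw m (e0 k) q * ((Wmat B b q : ℝ) : ℂ)),
      sum_pair (fun q => ((Wmat B a (e1 k) : ℝ) : ℂ) * Fw m (e1 k) q * ((Wmat B b q : ℝ) : ℂ))]
  simp only [Fw_e0_e0, Fw_e0_e1, Fw_e1_e0, Fw_e1_e1, Wmat_e0, Wmat_e1, mul_ite, ite_mul,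
    mul_zero, zero_mul, mul_one, Finset.sum_add_distrib, Finset.sum_ite_eq, Finset.sum_ite_eq',
    Finset.mem_univ, if_true]
  apply Complex.ext <;>
    simp [Complex.mul_re, Complex.mul_im, Complex.add_re, Complex.add_im] <;> ring
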